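/- arXiv:1010.5489 — 3 statements merged into one kernel-verified Lean document; each statement's English description precedes it below -/
import Mathlib

section
/- Let G be a topological group acting continuously on a second countable Hausdorff topological space X, and suppose that the orbit space X/G, equipped with the quotient topology, is Hausdorff. Then every G-invariant, G-ergodic Borel probability measure μ on X is concentrated on a single G-orbit; that is, there exists x ∈ X with μ(G·x) = 1. In particular, if in addition every G-orbit is a single point on a μ-conull set (e.g. if there are no nontrivial orbits carrying invariant measures), μ is a Dirac point mass. -/
open MeasureTheory

/-- If a topological group `G` acts continuously on a second countable Hausdorff space `X`
and the orbit space `X/G` is Hausdorff, then every `G`-invariant `G`-ergodic Borel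
probability measure on `X` is concentrated on a single `G`-orbit. -/
theorem ergodic_invariant_measure_on_single_orbit_of_t2_orbitSpace
    {G X : Type*} [Group G] [TopologicalSpace G] [IsTopologicalGroup G]
    [TopologicalSpace X] [T2Space X] [SecondCountableTopology X]
    [MeasurableSpace X] [BorelSpace X]
    [MulAction G X] [ContinuousSMul G X]
    (hT2 : T2Space (Quotient (MulAction.orbitRel G X)))
    (μ : Measure X) [IsProbabilityMeasure μ]
    (hinv : ∀ g : G, Measure.map (fun x => g • x) μ = μ)
    (herg : ∀ E : Set X, MeasurableSet E →
      (∀ g : G, (fun x => g • x) ⁻¹' E = E) → μ E = 0 ∨ μ E = 1) :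
    ∃ x : X, μ (MulAction.orbit G x) = 1 := by
  classical
  haveI := hT2
  set Q := Quotient (MulAction.orbitRel G X) with hQ
  set π : X → Q := Quotient.mk (MulAction.orbitRel G X) with hπ
  have hopen : IsOpenMap π := isOpenMap_quotient_mk'_mul
  haveI : SecondCountableTopology Q := TopologicalSpace.Quotient.secondCountableTopology hopen
  obtain ⟨b, hbcount, -, hbasis⟩ := TopologicalSpace.exists_countable_basis Q
  have hsat : ∀ B : Set Q, ∀ g : G, (fun x => g • x) ⁻¹' (π ⁻¹' B) = π ⁻¹' B := by
    intro B g
    ext x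
    have : π (g • x) = π x := Quotient.sound ⟨g, rfl⟩
    simp [Set.mem_preimage, this]
  have hmeas : ∀ B ∈ b, MeasurableSet (π ⁻¹' B) := fun B hB =>
    ((hbasis.isOpen hB).preimage continuous_quot_mk).measurableSet
  have h01 : ∀ B ∈ b, μ (π ⁻¹' B) = 0 ∨ μ (π ⁻¹' B) = 1 := fun B hB =>
    herg _ (hmeas B hB) (hsat B)
  set b1 : Set (Set Q) := {B ∈ b | μ (π ⁻¹' B) = 1} with hb1
  set b0 : Set (Set Q) := {B ∈ b | μ (π ⁻¹' B) = 0} with hb0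
  set S : Set X := (⋂ B ∈ b1, π ⁻¹' B) ∩ (⋂ B ∈ b0, (π ⁻¹' B)ᶜ) with hS
  have hSmeas : MeasurableSet S := by
    apply MeasurableSet.inter
    · exact MeasurableSet.biInter (hbcount.mono (Set.sep_subset _ _))
        fun B hB => hmeas B hB.1
    · exact MeasurableSet.biInter (hbcount.mono (Set.sep_subset _ _))
        fun B hB => (hmeas B hB.1).compl
  have hScnull : μ Sᶜ = 0 := by
    rw [hS, Set.compl_inter]
    apply measure_union_null
    · rw [Set.compl_iInter₂]
      apply (measure_biUnion_null_iff (hbcount.mono (Set.sep_subset _ _))).2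
      intro B hB
      rw [measure_compl (hmeas B hB.1) (measure_ne_top μ _), hB.2, measure_univ]
      simp
    · rw [Set.compl_iInter₂]
      apply (measure_biUnion_null_iff (hbcount.mono (Set.sep_subset _ _))).2
      intro B hB
      rw [compl_compl]
      exact hB.2
  have hμS : μ S = 1 := by
    have h := measure_compl hSmeas (measure_ne_top μ S)
    rw [hScnull, measure_univ] at h
    exact le_antisymm prob_le_one (tsub_eq_zero_iff_le.1 h.symm)
  have hne : S.Nonempty := by
    by_contra h
    rw [Set.not_nonempty_iff_eq_empty.1 h, measure_empty] at hμS
    exact one_ne_zero hμS.symm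
  obtain ⟨x, hx⟩ := hne
  refine ⟨x, ?_⟩
  have key : ∀ z ∈ S, ∀ B ∈ b, π z ∈ B → μ (π ⁻¹' B) = 1 := by
    intro z hz B hB hzB
    rcases h01 B hB with h | h
    · exact absurd hzB (Set.mem_iInter₂.1 hz.2 B ⟨hB, h⟩)
    · exact h
  have hsub : S ⊆ MulAction.orbit G x := by
    intro y hy
    by_contra hmem
    have hne' : π y ≠ π x := fun hEq => hmem (Quotient.exact hEq)
    obtain ⟨U, V, hU, hV, hyU, hxV, hUV⟩ := t2_separation hne'
    obtain ⟨B1, hB1b, hB1U, hB1y⟩ := hbasis.exists_subset_of_mem_open hyU hU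
    obtain ⟨B2, hB2b, hB2V, hB2x⟩ := hbasis.exists_subset_of_mem_open hxV hV
    have hμ1 := key y hy B1 hB1b hB1U
    have hμ2 := key x hx B2 hB2b hB2V
    have hdisj : Disjoint (π ⁻¹' B1) (π ⁻¹' B2) :=
      Disjoint.preimage π (hUV.mono hB1y hB2x)
    have h2le : (2 : ENNReal) ≤ 1 := by
      calc (2 : ENNReal) = μ (π ⁻¹' B1) + μ (π ⁻¹' B2) := by rw [hμ1, hμ2]; norm_num
        _ = μ (π ⁻¹' B1 ∪ π ⁻¹' B2) := (measure_union hdisj (hmeas B2 hB2b)).symm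
        _ ≤ 1 := prob_le_one
    exact absurd h2le (by norm_num)
  exact le_antisymm prob_le_one (hμS ▸ measure_mono hsub)
end

section
/- Let K be a nonarchimedean local field with residue field of cardinality q. For all positive integers N, M, d there exists a nonnegative integer m, depending only on N, d and q, with the following property: for every ball B ⊆ K^N of radius r and every polynomial map F : K^N → K^M of degree at most d, there exists t₀ ∈ B such that |F(t)| = sup_{s ∈ B} |F(s)| for every t in the ball of radius r/q^m centered at t₀. (In particular, the supremum of |F| over B is attained on a whole sub-ball of B of comparable radius.) -/
set_option linter.unusedSectionVars false
set_option maxHeartbeats 1000000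

open Metric IsUltrametricDist

namespace PolyAux

variable {K : Type*} [NontriviallyNormedField K] [IsUltrametricDist K]

lemma unitBall_infinite : {x : K | ‖x‖ ≤ 1}.Infinite := by
  obtain ⟨c, hc0, hc1⟩ := NormedField.exists_norm_lt_one K
  have hinj : Function.Injective (fun n : ℕ => c ^ n) := by
    intro m n hmn
    have : ‖c‖ ^ m = ‖c‖ ^ n := by
      simpa [norm_pow] using congrArg norm hmn
    exact (pow_right_strictAnti₀ hc0 hc1).injective this
  exact Set.infinite_of_injective_forall_mem hinj
    (fun n => by simpa using pow_le_one₀ (norm_nonneg c) hc1.le)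

lemma mv_eq_zero_of_vanish (n : ℕ) (P : MvPolynomial (Fin n) K)
    (h : ∀ t : Fin n → K, (∀ i, ‖t i‖ ≤ 1) → MvPolynomial.eval t P = 0) : P = 0 := by
  induction n with
  | zero =>
    have h0 := h (fun i => i.elim0) (fun i => i.elim0)
    rw [MvPolynomial.eq_C_of_isEmpty P] at h0 ⊢
    rw [MvPolynomial.eval_C] at h0
    rw [h0, map_zero]
  | succ n ih =>
    have key : ∀ s : Fin n → K, (∀ i, ‖s i‖ ≤ 1) →
        Polynomial.map (MvPolynomial.eval s) (MvPolynomial.finSuccEquiv K n P) = 0 := by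
      intro s hs
      apply Polynomial.eq_zero_of_infinite_isRoot
      apply unitBall_infinite.mono
      intro y hy
      simp only [Set.mem_setOf_eq, Polynomial.IsRoot.def] at hy ⊢
      rw [← MvPolynomial.eval_eq_eval_mv_eval']
      refine h (Fin.cons y s) ?_
      intro i
      refine Fin.cases ?_ ?_ i
      · simpa using hy
      · intro j; simpa using hs j
    have hc : ∀ k, (MvPolynomial.finSuccEquiv K n P).coeff k = 0 := by
      intro k
      apply ih
      intro s hs
      have hk := congrArg (fun p => Polynomial.coeff p k) (key s hs)
      simpa [Polynomial.coeff_map] using hk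
    have hz : MvPolynomial.finSuccEquiv K n P = 0 := Polynomial.ext fun k => by simp [hc]
    have := congrArg (MvPolynomial.finSuccEquiv K n).symm hz
    simpa using this

lemma norm_eq_of_norm_sub_lt {x y : K} (h : ‖x - y‖ < ‖y‖) : ‖x‖ = ‖y‖ := by
  have h1 : ‖x‖ ≤ ‖y‖ := by
    have h2 := norm_add_le_max (x - y) y
    rw [sub_add_cancel] at h2
    exact h2.trans (max_le h.le le_rfl)
  refine le_antisymm h1 ?_
  have h3 := norm_add_le_max (y - x) x
  rw [sub_add_cancel] at h3
  rcases max_cases ‖y - x‖ ‖x‖ with ⟨heq, _⟩ | ⟨heq, _⟩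
  · rw [heq, norm_sub_rev] at h3
    exact absurd (lt_of_le_of_lt h3 h) (lt_irrefl _)
  · rwa [heq] at h3

lemma norm_prod_sub_prod_le {ι : Type*} (s : Finset ι) (x y : ι → K) {ε : ℝ} (hε : 0 ≤ ε)
    (hx : ∀ i ∈ s, ‖x i‖ ≤ 1) (hy : ∀ i ∈ s, ‖y i‖ ≤ 1)
    (hxy : ∀ i ∈ s, ‖x i - y i‖ ≤ ε) :
    ‖∏ i ∈ s, x i - ∏ i ∈ s, y i‖ ≤ ε := by
  classical
  revert hx hy hxy
  induction s using Finset.induction_on with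
  | empty => intro _ _ _; simpa using hε
  | @insert j s hj ihs =>
    intro hx hy hxy
    rw [Finset.prod_insert hj, Finset.prod_insert hj]
    have h1 : x j * ∏ i ∈ s, x i - y j * ∏ i ∈ s, y i
        = x j * (∏ i ∈ s, x i - ∏ i ∈ s, y i) + (x j - y j) * ∏ i ∈ s, y i := by ring
    rw [h1]
    refine (norm_add_le_max _ _).trans (max_le ?_ ?_)
    · rw [norm_mul]
      calc ‖x j‖ * ‖∏ i ∈ s, x i - ∏ i ∈ s, y i‖
          ≤ 1 * ε := by
            refine mul_le_mul (hx j (Finset.mem_insert_self j s)) ?_ (norm_nonneg _) zero_le_one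
            exact ihs (fun i hi => hx i (Finset.mem_insert_of_mem hi))
              (fun i hi => hy i (Finset.mem_insert_of_mem hi))
              (fun i hi => hxy i (Finset.mem_insert_of_mem hi))
        _ = ε := one_mul ε
    · rw [norm_mul]
      calc ‖x j - y j‖ * ‖∏ i ∈ s, y i‖ ≤ ε * 1 := by
            refine mul_le_mul (hxy j (Finset.mem_insert_self j s)) ?_ (norm_nonneg _) hε
            rw [norm_prod]
            exact Finset.prod_le_one (fun i _ => norm_nonneg _)
              (fun i hi => hy i (Finset.mem_insert_of_mem hi))
        _ = ε := mul_one ε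

lemma norm_pow_sub_pow_le {x y : K} (hx : ‖x‖ ≤ 1) (hy : ‖y‖ ≤ 1) (n : ℕ) :
    ‖x ^ n - y ^ n‖ ≤ ‖x - y‖ := by
  have := norm_prod_sub_prod_le (Finset.range n) (fun _ => x) (fun _ => y)
    (norm_nonneg (x - y)) (fun _ _ => hx) (fun _ _ => hy) (fun _ _ => le_rfl)
  simpa using this









variable {K : Type*} [NontriviallyNormedField K] [IsUltrametricDist K]
variable (N d : ℕ)

/-- Evaluation of a degree-`≤ d` coefficient family. -/
def meval (a : (Fin N → Fin (d + 1)) → K) (t : Fin N → K) : K :=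
  ∑ β : Fin N → Fin (d + 1), a β * ∏ i, t i ^ (β i : ℕ)

lemma norm_mon_le_one {t : Fin N → K} (ht : ‖t‖ ≤ 1) (α : Fin N → ℕ) :
    ‖∏ i, t i ^ α i‖ ≤ 1 := by
  rw [norm_prod]
  refine Finset.prod_le_one (fun i _ => norm_nonneg _) (fun i _ => ?_)
  rw [norm_pow]
  exact pow_le_one₀ (norm_nonneg _) ((norm_le_pi_norm t i).trans ht)

lemma norm_mon_sub_le {t s : Fin N → K} (ht : ‖t‖ ≤ 1) (hs : ‖s‖ ≤ 1) (α : Fin N → ℕ) :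
    ‖∏ i, t i ^ α i - ∏ i, s i ^ α i‖ ≤ ‖t - s‖ := by
  refine norm_prod_sub_prod_le Finset.univ (fun i => t i ^ α i) (fun i => s i ^ α i)
    (norm_nonneg _) (fun i _ => ?_) (fun i _ => ?_) (fun i _ => ?_)
  · rw [norm_pow]; exact pow_le_one₀ (norm_nonneg _) ((norm_le_pi_norm t i).trans ht)
  · rw [norm_pow]; exact pow_le_one₀ (norm_nonneg _) ((norm_le_pi_norm s i).trans hs)
  · refine (norm_pow_sub_pow_le ((norm_le_pi_norm t i).trans ht)
      ((norm_le_pi_norm s i).trans hs) (α i)).trans ?_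
    simpa using norm_le_pi_norm (t - s) i

lemma meval_sub_coeff (a a' : (Fin N → Fin (d + 1)) → K) {t : Fin N → K} (ht : ‖t‖ ≤ 1) :
    ‖meval N d a t - meval N d a' t‖ ≤ ‖a - a'‖ := by
  rw [meval, meval, ← Finset.sum_sub_distrib]
  refine norm_sum_le_of_forall_le_of_nonneg (norm_nonneg _) (fun β _ => ?_)
  rw [← sub_mul, norm_mul]
  calc ‖a β - a' β‖ * ‖∏ i, t i ^ (β i : ℕ)‖
      ≤ ‖a - a'‖ * 1 := by
        refine mul_le_mul ?_ (norm_mon_le_one N ht _) (norm_nonneg _) (norm_nonneg _)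
        simpa using norm_le_pi_norm (a - a') β
    _ = ‖a - a'‖ := mul_one _

lemma meval_sub_point (a : (Fin N → Fin (d + 1)) → K) {t s : Fin N → K}
    (ht : ‖t‖ ≤ 1) (hs : ‖s‖ ≤ 1) :
    ‖meval N d a t - meval N d a s‖ ≤ ‖a‖ * ‖t - s‖ := by
  rw [meval, meval, ← Finset.sum_sub_distrib]
  refine norm_sum_le_of_forall_le_of_nonneg
    (mul_nonneg (norm_nonneg _) (norm_nonneg _)) (fun β _ => ?_)
  rw [← mul_sub, norm_mul]
  exact mul_le_mul (norm_le_pi_norm a β) (norm_mon_sub_le N ht hs _)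
    (norm_nonneg _) (norm_nonneg _)

lemma meval_continuous (a : (Fin N → Fin (d + 1)) → K) : Continuous (meval N d a) := by
  refine continuous_finset_sum _ (fun β _ => Continuous.mul continuous_const ?_)
  exact continuous_finset_prod _ (fun i _ => (continuous_apply i).pow _)

/-- exponent finsupp attached to an index. -/
noncomputable def expn (β : Fin N → Fin (d + 1)) : Fin N →₀ ℕ :=
  Finsupp.equivFunOnFinite.symm (fun i => (β i : ℕ))

lemma expn_apply (β : Fin N → Fin (d + 1)) (i : Fin N) : expn N d β i = (β i : ℕ) := rfl

lemma expn_injective : Function.Injective (expn N d) := by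
  intro β β' h
  funext i
  exact Fin.ext (by rw [← expn_apply N d β i, ← expn_apply N d β' i, h])

lemma meval_eq_eval_poly (Q : MvPolynomial (Fin N) K) (hQ : Q.totalDegree ≤ d)
    (t : Fin N → K) :
    meval N d (fun β => Q.coeff (expn N d β)) t = MvPolynomial.eval t Q := by
  classical
  rw [MvPolynomial.eval_eq', meval]
  have hmon : ∀ β : Fin N → Fin (d + 1),
      (∏ i, t i ^ (β i : ℕ)) = ∏ i, t i ^ (expn N d β i) := by
    intro β; rfl
  have h1 : (∑ β : Fin N → Fin (d + 1), Q.coeff (expn N d β) * ∏ i, t i ^ (β i : ℕ))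
      = ∑ v ∈ Finset.univ.image (expn N d), Q.coeff v * ∏ i, t i ^ v i := by
    rw [Finset.sum_image (fun β _ β' _ h => expn_injective N d h)]
    rfl
  rw [h1]
  refine (Finset.sum_subset ?_ ?_).symm
  · intro v hv
    have hvle : ∀ i, v i ≤ d := by
      intro i
      by_cases hvi : v i = 0
      · simp [hvi]
      · have hmem : i ∈ v.support := Finsupp.mem_support_iff.mpr hvi
        have h2 : v i ≤ v.sum fun _ e => e := by
          rw [Finsupp.sum]
          exact Finset.single_le_sum (fun j _ => Nat.zero_le _) hmem
        exact h2.trans ((MvPolynomial.le_totalDegree hv).trans hQ)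
    refine Finset.mem_image.mpr ⟨fun i => ⟨v i, Nat.lt_succ_of_le (hvle i)⟩,
      Finset.mem_univ _, ?_⟩
    ext i
    rfl
  · intro v _ hv
    rw [MvPolynomial.notMem_support_iff.mp hv, zero_mul]


lemma exists_nonzero (a : (Fin N → Fin (d + 1)) → K) (ha : a ≠ 0) :
    ∃ t : Fin N → K, ‖t‖ ≤ 1 ∧ meval N d a t ≠ 0 := by
  classical
  set P : MvPolynomial (Fin N) K :=
    ∑ β : Fin N → Fin (d + 1), MvPolynomial.monomial (expn N d β) (a β) with hP
  have hco : ∀ β, P.coeff (expn N d β) = a β := by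
    intro β
    rw [hP, MvPolynomial.coeff_sum]
    rw [Finset.sum_eq_single β]
    · rw [MvPolynomial.coeff_monomial, if_pos rfl]
    · intro β' _ hne
      rw [MvPolynomial.coeff_monomial, if_neg (fun h => hne (expn_injective N d h))]
    · intro h; exact absurd (Finset.mem_univ β) h
  have hev : ∀ t : Fin N → K, MvPolynomial.eval t P = meval N d a t := by
    intro t
    rw [hP, map_sum, meval]
    refine Finset.sum_congr rfl (fun β _ => ?_)
    rw [MvPolynomial.eval_monomial]
    congr 1
    rw [Finsupp.prod_fintype _ _ (fun _ => pow_zero _)]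
    rfl
  have hPne : P ≠ 0 := by
    intro h0
    apply ha
    funext β
    have := hco β
    rw [h0] at this
    simpa using this.symm
  by_contra hcon
  push_neg at hcon
  apply hPne
  refine mv_eq_zero_of_vanish N P (fun t ht => ?_)
  have ht' : ‖t‖ ≤ 1 := (pi_norm_le_iff_of_nonneg zero_le_one).mpr ht
  rw [hev t]
  by_contra hne
  exact hne (hcon t ht')


variable [CompleteSpace K] [LocallyCompactSpace K]

lemma pi_norm_add_le_max {ι : Type*} [Fintype ι] (x y : ι → K) :
    ‖x + y‖ ≤ max ‖x‖ ‖y‖ := by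
  refine (pi_norm_le_iff_of_nonneg (le_max_of_le_left (norm_nonneg x))).mpr fun i => ?_
  exact (norm_add_le_max (x i) (y i)).trans
    (max_le_max (norm_le_pi_norm x i) (norm_le_pi_norm y i))

lemma exists_greatest_meval (a : (Fin N → Fin (d + 1)) → K) :
    ∃ t₀ : Fin N → K, ‖t₀‖ ≤ 1 ∧
      IsGreatest ((fun s => ‖meval N d a s‖) '' closedBall 0 1) ‖meval N d a t₀‖ := by
  have hprop : ProperSpace K :=
    ProperSpace.of_nontriviallyNormedField_of_weaklyLocallyCompactSpace K
  obtain ⟨t₀, ht₀, hmax⟩ := (isCompact_closedBall (0 : Fin N → K) 1).exists_isMaxOn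
    ⟨0, mem_closedBall_self zero_le_one⟩
    ((continuous_norm.comp (meval_continuous N d a)).continuousOn)
  refine ⟨t₀, by simpa [mem_closedBall_zero_iff] using ht₀, ?_, ?_⟩
  · exact Set.mem_image_of_mem _ ht₀
  · rintro v ⟨s, hs, rfl⟩
    exact hmax hs

lemma key (q : ℝ) (hq : 1 < q) :
    ∃ m₀ : ℕ, ∀ a : (Fin N → Fin (d + 1)) → K, ‖a‖ = 1 →
      ∃ t₀ : Fin N → K, ‖t₀‖ ≤ 1 ∧ ∀ t : Fin N → K, ‖t - t₀‖ ≤ (1 / q) ^ m₀ →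
        IsGreatest ((fun s => ‖meval N d a s‖) '' closedBall 0 1) ‖meval N d a t‖ := by
  classical
  have hq0 : (0 : ℝ) < q := lt_trans one_pos hq
  have h1q0 : (0 : ℝ) < 1 / q := by positivity
  have h1q1 : (1 : ℝ) / q < 1 := (div_lt_one hq0).mpr hq
  have hprop : ProperSpace K :=
    ProperSpace.of_nontriviallyNormedField_of_weaklyLocallyCompactSpace K
  set EK := (Fin N → Fin (d + 1)) → K with hEK
  have H : ∀ a : EK, ‖a‖ = 1 → ∃ (t₀ : Fin N → K) (ma : ℕ), ‖t₀‖ ≤ 1 ∧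
      (1 / q) ^ ma < ‖meval N d a t₀‖ ∧
      IsGreatest ((fun s => ‖meval N d a s‖) '' closedBall 0 1) ‖meval N d a t₀‖ := by
    intro a ha
    obtain ⟨t₀, ht₀, hg⟩ := exists_greatest_meval N d a
    have hane : a ≠ 0 := fun h0 => by simp [h0] at ha
    obtain ⟨t, ht, htne⟩ := exists_nonzero N d a hane
    have hpos : 0 < ‖meval N d a t₀‖ :=
      lt_of_lt_of_le (norm_pos_iff.mpr htne)
        (hg.2 (Set.mem_image_of_mem _ (mem_closedBall_zero_iff.mpr ht)))
    obtain ⟨ma, hma⟩ := exists_pow_lt_of_lt_one hpos h1q1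
    exact ⟨t₀, ma, ht₀, hma, hg⟩
  choose t₀f mf ht₀f hmf hgf using fun i : {a : EK // ‖a‖ = 1} => H i.1 i.2
  have hcov : Metric.sphere (0 : EK) 1 ⊆
      ⋃ i : {a : EK // ‖a‖ = 1}, Metric.ball (i : EK) ‖meval N d i.1 (t₀f i)‖ := by
    intro a ha
    have ha' : ‖a‖ = 1 := by simpa using mem_sphere_zero_iff_norm.mp ha
    refine Set.mem_iUnion.mpr ⟨⟨a, ha'⟩, ?_⟩
    have : (0:ℝ) < ‖meval N d a (t₀f ⟨a, ha'⟩)‖ :=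
      lt_trans (pow_pos h1q0 _) (hmf ⟨a, ha'⟩)
    simpa [Metric.mem_ball] using this
  obtain ⟨F, hF⟩ := (isCompact_sphere (0 : EK) 1).elim_finite_subcover _
    (fun i => Metric.isOpen_ball) hcov
  refine ⟨F.sup mf, ?_⟩
  intro a ha
  have haS : a ∈ Metric.sphere (0 : EK) 1 := mem_sphere_zero_iff_norm.mpr ha
  have hmem := hF haS
  rw [Set.mem_iUnion₂] at hmem
  obtain ⟨i, hiF, hai⟩ := hmem
  set S := ‖meval N d i.1 (t₀f i)‖ with hS
  have haiS : ‖a - i.1‖ < S := by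
    rw [← dist_eq_norm]
    simpa [Metric.mem_ball] using hai
  refine ⟨t₀f i, ht₀f i, ?_⟩
  intro t ht
  have hrad : (1 / q) ^ (F.sup mf) ≤ (1 / q) ^ (mf i) :=
    pow_le_pow_of_le_one h1q0.le h1q1.le (Finset.le_sup hiF)
  have htt : ‖t - t₀f i‖ ≤ (1 / q) ^ (mf i) := le_trans ht hrad
  have htb : ‖t‖ ≤ 1 := by
    have h2 := pi_norm_add_le_max (t - t₀f i) (t₀f i)
    rw [sub_add_cancel] at h2
    refine h2.trans (max_le (htt.trans ?_) (ht₀f i))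
    exact (pow_le_one₀ h1q0.le h1q1.le)
  have e2 : ‖meval N d i.1 t - meval N d i.1 (t₀f i)‖ < S := by
    refine lt_of_le_of_lt ((meval_sub_point N d i.1 htb (by
      simpa [mem_closedBall_zero_iff] using ht₀f i)).trans ?_) (hmf i)
    rw [i.2, one_mul]
    exact htt
  have eq1 : ‖meval N d i.1 t‖ = S := norm_eq_of_norm_sub_lt e2
  have e1 : ‖meval N d a t - meval N d i.1 t‖ < S :=
    lt_of_le_of_lt (meval_sub_coeff N d a i.1 htb) haiS
  have eq2 : ‖meval N d a t‖ = S := by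
    rw [← eq1] at e1 ⊢
    exact norm_eq_of_norm_sub_lt e1
  constructor
  · exact Set.mem_image_of_mem _ (mem_closedBall_zero_iff.mpr htb)
  · rintro v ⟨s, hs, rfl⟩
    have hsb : ‖s‖ ≤ 1 := mem_closedBall_zero_iff.mp hs
    have h3 := norm_add_le_max (meval N d i.1 s) (meval N d a s - meval N d i.1 s)
    rw [add_sub_cancel] at h3
    refine h3.trans ?_
    rw [eq2]
    refine max_le (hgf i |>.2 (Set.mem_image_of_mem _ hs)) ?_
    exact (meval_sub_coeff N d a i.1 hsb).trans haiS.le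


lemma eval_eq_aeval (f : Fin N → K) (p : MvPolynomial (Fin N) K) :
    MvPolynomial.aeval f p = MvPolynomial.eval f p :=
  RingHom.congr_fun (MvPolynomial.coe_aeval_eq_eval f) p

lemma scalar (q : ℝ) (hq : 1 < q) :
    ∃ m₀ : ℕ, ∀ P : MvPolynomial (Fin N) K, P.totalDegree ≤ d →
      ∀ (c : Fin N → K) (u : K), u ≠ 0 →
      ∃ t₀ ∈ closedBall c ‖u‖, ∀ t ∈ closedBall t₀ ((1 / q) ^ m₀ * ‖u‖),
        IsGreatest ((fun s => ‖MvPolynomial.eval s P‖) '' closedBall c ‖u‖)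
          ‖MvPolynomial.eval t P‖ := by
  classical
  obtain ⟨m₀, hkey⟩ := key (K := K) N d q hq
  have hq0 : (0:ℝ) < q := lt_trans one_pos hq
  have h1q0 : (0:ℝ) < 1 / q := by positivity
  have h1q1 : (1:ℝ) / q < 1 := (div_lt_one hq0).mpr hq
  refine ⟨m₀, ?_⟩
  intro P hPdeg c u hu
  have hu0 : (0:ℝ) < ‖u‖ := norm_pos_iff.mpr hu
  set g : Fin N → MvPolynomial (Fin N) K :=
    fun j => MvPolynomial.C (c j) + MvPolynomial.C u * MvPolynomial.X j with hg
  set Q := MvPolynomial.bind₁ g P with hQdef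
  have hgdeg : ∀ j, (g j).totalDegree ≤ 1 := by
    intro j
    refine (MvPolynomial.totalDegree_add _ _).trans (max_le ?_ ?_)
    · simp [MvPolynomial.totalDegree_C]
    · refine (MvPolynomial.totalDegree_mul _ _).trans ?_
      simp [MvPolynomial.totalDegree_C, MvPolynomial.totalDegree_X]
  have hQdeg : Q.totalDegree ≤ d := by
    refine le_trans ?_ hPdeg
    rw [hQdef]
    conv_lhs => rw [P.as_sum]
    rw [map_sum]
    refine MvPolynomial.totalDegree_finsetSum_le (fun v hv => ?_)
    rw [MvPolynomial.bind₁_monomial]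
    refine (MvPolynomial.totalDegree_mul _ _).trans ?_
    rw [MvPolynomial.totalDegree_C, zero_add]
    refine (MvPolynomial.totalDegree_finset_prod _ _).trans ?_
    have h5 : ∀ i ∈ v.support, (MvPolynomial.totalDegree (g i ^ v i)) ≤ v i := by
      intro i _
      refine (MvPolynomial.totalDegree_pow _ _).trans ?_
      have := Nat.mul_le_mul_left (v i) (hgdeg i)
      simpa using this
    refine (Finset.sum_le_sum h5).trans ?_
    calc (∑ i ∈ v.support, v i) = v.sum fun _ e => e := rfl
      _ ≤ P.totalDegree := MvPolynomial.le_totalDegree hv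
  have hQeval : ∀ s : Fin N → K, MvPolynomial.eval s Q = MvPolynomial.eval (c + u • s) P := by
    intro s
    rw [hQdef, ← eval_eq_aeval, MvPolynomial.aeval_bind₁]
    have harg : (fun i => MvPolynomial.aeval s (g i)) = c + u • s := by
      funext j
      simp [hg, smul_eq_mul]
    rw [harg, eval_eq_aeval]
  set a : (Fin N → Fin (d + 1)) → K := fun β => Q.coeff (expn N d β) with ha
  have hma : ∀ s, meval N d a s = MvPolynomial.eval s Q :=
    fun s => meval_eq_eval_poly N d Q hQdeg s
  have hradle : (1 / q) ^ m₀ * ‖u‖ ≤ ‖u‖ :=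
    mul_le_of_le_one_left (norm_nonneg u) (pow_le_one₀ h1q0.le h1q1.le)
  have hinv : ∀ s' : Fin N → K, s' ∈ closedBall c ‖u‖ →
      ‖u⁻¹ • (s' - c)‖ ≤ 1 ∧ s' = c + u • (u⁻¹ • (s' - c)) := by
    intro s' hs'
    constructor
    · rw [norm_smul, norm_inv]
      have h1 : ‖s' - c‖ ≤ ‖u‖ := by
        rw [← dist_eq_norm]; exact mem_closedBall.mp hs'
      calc ‖u‖⁻¹ * ‖s' - c‖ ≤ ‖u‖⁻¹ * ‖u‖ :=
            mul_le_mul_of_nonneg_left h1 (inv_nonneg.mpr (norm_nonneg u))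
        _ = 1 := inv_mul_cancel₀ hu0.ne'
    · rw [smul_smul, mul_inv_cancel₀ hu, one_smul, add_sub_cancel]
  by_cases haz : a = 0
  · have hz : ∀ s' ∈ closedBall c ‖u‖, MvPolynomial.eval s' P = 0 := by
      intro s' hs'
      obtain ⟨hn, heq⟩ := hinv s' hs'
      have h2 := hma (u⁻¹ • (s' - c))
      rw [haz] at h2
      simp only [meval, Pi.zero_apply, zero_mul, Finset.sum_const_zero] at h2
      rw [heq, ← hQeval]
      exact h2.symm
    refine ⟨c, mem_closedBall_self (norm_nonneg u), ?_⟩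
    intro t htball
    have htmem : t ∈ closedBall c ‖u‖ :=
      closedBall_subset_closedBall hradle htball
    constructor
    · exact ⟨t, htmem, rfl⟩
    · rintro v ⟨s', hs', rfl⟩
      simp [hz s' hs', hz t htmem]
  · obtain ⟨βh, -, hβh⟩ := Finset.exists_mem_eq_sup
      (Finset.univ : Finset (Fin N → Fin (d + 1))) ⟨fun _ => 0, Finset.mem_univ _⟩
      (fun β => ‖a β‖₊)
    have hβh' : ‖a‖ = ‖a βh‖ := by
      rw [Pi.norm_def, hβh]; rfl
    have hbne : a βh ≠ 0 := by
      intro h0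
      exact haz (norm_eq_zero.mp (by rw [hβh', h0, norm_zero]))
    set b := a βh with hb
    set a' := b⁻¹ • a with ha'
    have hbn0 : ‖b‖ ≠ 0 := norm_ne_zero_iff.mpr hbne
    have ha'1 : ‖a'‖ = 1 := by
      rw [ha', norm_smul, norm_inv, hβh']
      exact inv_mul_cancel₀ hbn0
    have hm' : ∀ s, meval N d a' s = b⁻¹ * meval N d a s := by
      intro s
      rw [ha', meval, meval, Finset.mul_sum]
      refine Finset.sum_congr rfl (fun β _ => ?_)
      rw [Pi.smul_apply, smul_eq_mul, mul_assoc]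
    obtain ⟨t₀', ht₀', hbig⟩ := hkey a' ha'1
    have himg : ∀ s1 : Fin N → K,
        ‖MvPolynomial.eval (c + u • s1) P‖ = ‖b‖ * ‖meval N d a' s1‖ := by
      intro s1
      rw [hm', norm_mul, norm_inv, ← mul_assoc, mul_inv_cancel₀ hbn0, one_mul,
        hma, hQeval]
    refine ⟨c + u • t₀', ?_, ?_⟩
    · rw [mem_closedBall_iff_norm]
      simp only [add_sub_cancel_left]
      rw [norm_smul]
      exact mul_le_of_le_one_right (norm_nonneg u) ht₀'
    · intro t htball
      set s := u⁻¹ • (t - c) with hs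
      have hseq : s - t₀' = u⁻¹ • (t - (c + u • t₀')) := by
        rw [sub_add_eq_sub_sub, smul_sub u⁻¹ (t - c) (u • t₀'), smul_smul,
          inv_mul_cancel₀ hu, one_smul, hs]
      have hsdist : ‖s - t₀'‖ ≤ (1 / q) ^ m₀ := by
        rw [hseq, norm_smul, norm_inv]
        have hd : ‖t - (c + u • t₀')‖ ≤ (1 / q) ^ m₀ * ‖u‖ := by
          rw [← dist_eq_norm]; exact mem_closedBall.mp htball
        calc ‖u‖⁻¹ * ‖t - (c + u • t₀')‖ ≤ ‖u‖⁻¹ * ((1 / q) ^ m₀ * ‖u‖) :=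
              mul_le_mul_of_nonneg_left hd (inv_nonneg.mpr (norm_nonneg u))
          _ = (1 / q) ^ m₀ := by field_simp
      have hsn : ‖s‖ ≤ 1 := by
        have h2 := pi_norm_add_le_max (s - t₀') t₀'
        rw [sub_add_cancel] at h2
        exact h2.trans (max_le (hsdist.trans (pow_le_one₀ h1q0.le h1q1.le)) ht₀')
      have hts : t = c + u • s := by
        rw [hs, smul_smul, mul_inv_cancel₀ hu, one_smul, add_sub_cancel]
      have hG := hbig s hsdist
      constructor
      · refine ⟨t, ?_, rfl⟩
        rw [mem_closedBall_iff_norm, hts]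
        simp only [add_sub_cancel_left]
        rw [norm_smul]
        exact mul_le_of_le_one_right (norm_nonneg u) hsn
      · rintro v ⟨s', hs', rfl⟩
        obtain ⟨hs1n, hs1eq⟩ := hinv s' hs'
        show ‖MvPolynomial.eval s' P‖ ≤ ‖MvPolynomial.eval t P‖
        calc ‖MvPolynomial.eval s' P‖
            = ‖b‖ * ‖meval N d a' (u⁻¹ • (s' - c))‖ := by
              conv_lhs => rw [hs1eq]
              exact himg _
          _ ≤ ‖b‖ * ‖meval N d a' s‖ :=
              mul_le_mul_of_nonneg_left
                (hG.2 ⟨u⁻¹ • (s' - c), mem_closedBall_zero_iff.mpr hs1n, rfl⟩)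
                (norm_nonneg b)
          _ = ‖MvPolynomial.eval t P‖ := by
              rw [hts]; exact (himg s).symm

end PolyAux

open Metric


open Metric


/-- `F : K^N → K^M` is a polynomial map of (total) degree at most `d`: each of its `M`
coordinate functions is given by a polynomial in `N` variables over `K` of total degree
at most `d`. -/
def IsPolyMapOfDeg (K : Type*) [Field K] (N M d : ℕ)
    (F : (Fin N → K) → (Fin M → K)) : Prop :=
  ∃ P : Fin M → MvPolynomial (Fin N) K,
    (∀ i, (P i).totalDegree ≤ d) ∧ ∀ t i, F t i = MvPolynomial.eval t (P i)

/-- Over a nonarchimedean local field `K` with residue field of cardinality `q`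
(equivalently, with value group `q^ℤ`), for all positive `N, d` there is `m`, depending
only on `N`, `d` and `q`, such that for every polynomial map `F : K^N → K^M` of degree
at most `d` and every ball `B` of radius `r`, there is `t₀ ∈ B` with
`|F(t)| = sup_{s ∈ B} |F(s)|` for all `t` in the ball of radius `r / q^m` around `t₀`. -/
theorem polymap_norm_attains_sup_on_subball
    {K : Type*} [NontriviallyNormedField K] [IsUltrametricDist K]
    [CompleteSpace K] [LocallyCompactSpace K]
    (q : ℝ) (hq : 1 < q)
    (hval : ∀ x : K, x ≠ 0 → ∃ n : ℤ, ‖x‖ = q ^ n)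
    (N d : ℕ) (hN : 0 < N) (hd : 0 < d) :
    ∃ m : ℕ, ∀ M : ℕ, 0 < M →
      ∀ F : (Fin N → K) → (Fin M → K), IsPolyMapOfDeg K N M d F →
      ∀ (c : Fin N → K) (r : ℝ), 0 < r →
      ∃ t₀ ∈ closedBall c r, ∀ t ∈ closedBall t₀ (r / q ^ m),
        ‖F t‖ = ⨆ s ∈ closedBall c r, ‖F s‖ := by
  classical
  obtain ⟨m₀, hscalar⟩ := PolyAux.scalar (K := K) N d q hq
  have hq0 : (0:ℝ) < q := lt_trans one_pos hq
  have h1q0 : (0:ℝ) < 1 / q := by positivity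
  have h1q1 : (1:ℝ) / q < 1 := (div_lt_one hq0).mpr hq
  obtain ⟨x₁, hx₁⟩ := NormedField.exists_one_lt_norm K
  have hx₁ne : x₁ ≠ 0 := by
    intro h; rw [h, norm_zero] at hx₁; linarith
  obtain ⟨j, hj⟩ := hval x₁ hx₁ne
  have hjpos : 0 < j := by
    by_contra hle
    push_neg at hle
    have h2 : (q:ℝ) ^ j ≤ q ^ (0:ℤ) := zpow_le_zpow_right₀ hq.le hle
    rw [zpow_zero, ← hj] at h2
    linarith
  have hPex : ∃ n : ℕ, 0 < n ∧ ∃ x : K, x ≠ 0 ∧ ‖x‖ = q ^ (n : ℤ) := by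
    refine ⟨j.toNat, by omega, x₁, hx₁ne, ?_⟩
    rw [hj]
    congr 1
    omega
  set n₀ := Nat.find hPex with hn₀def
  obtain ⟨hn₀pos, x₀, hx₀ne, hx₀⟩ := Nat.find_spec hPex
  have hn₀z : (0:ℤ) < (n₀:ℤ) := by exact_mod_cast hn₀pos
  -- every attained norm is a power of q^(n₀)
  have hgrp : ∀ x : K, x ≠ 0 → ∃ k : ℤ, ‖x‖ = q ^ ((n₀:ℤ) * k) := by
    intro x hx
    obtain ⟨i, hi⟩ := hval x hx
    refine ⟨i / (n₀:ℤ), ?_⟩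
    have hdm := Int.mul_ediv_add_emod i (n₀:ℤ)
    set rem := i % (n₀:ℤ) with hremdef
    have h0le : 0 ≤ rem := Int.emod_nonneg i hn₀z.ne'
    have hltn : rem < (n₀:ℤ) := Int.emod_lt_of_pos i hn₀z
    have hremz : rem = 0 := by
      by_contra hne
      have hpos : 0 < rem := lt_of_le_of_ne h0le (Ne.symm hne)
      have hy : x * x₀ ^ (-(i / (n₀:ℤ))) ≠ 0 := mul_ne_zero hx (zpow_ne_zero _ hx₀ne)
      have hyn : ‖x * x₀ ^ (-(i / (n₀:ℤ)))‖ = q ^ rem := by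
        rw [norm_mul, norm_zpow, hi, hx₀, ← zpow_mul, ← zpow_add₀ hq0.ne']
        congr 1
        rw [mul_neg]
        linarith [hdm]
      have hfind := Nat.find_min hPex (m := rem.toNat) (by omega)
      refine hfind ⟨by omega, x * x₀ ^ (-(i / (n₀:ℤ))), hy, ?_⟩
      rw [hyn]
      congr 1
      omega
    rw [hi]
    congr 1
    linarith [hdm]
  have hgrpv : ∀ v : Fin N → K, v ≠ 0 → ∃ k : ℤ, ‖v‖ = q ^ ((n₀:ℤ) * k) := by
    intro v hv
    obtain ⟨i0, -, hi0⟩ := Finset.exists_mem_eq_sup (Finset.univ : Finset (Fin N))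
      ⟨⟨0, hN⟩, Finset.mem_univ _⟩ (fun i => ‖v i‖₊)
    have hnv : ‖v‖ = ‖v i0‖ := by rw [Pi.norm_def, hi0]; rfl
    have hvi0 : v i0 ≠ 0 := by
      intro h0
      exact hv (norm_eq_zero.mp (by rw [hnv, h0, norm_zero]))
    obtain ⟨k, hk⟩ := hgrp (v i0) hvi0
    exact ⟨k, by rw [hnv, hk]⟩
  refine ⟨m₀ + n₀, ?_⟩
  intro M hM F hF c r hr
  obtain ⟨P, hPdeg, hFP⟩ := hF
  -- the greatest k with q^(n₀ k) ≤ r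
  have hbdd : ∃ b : ℤ, ∀ z : ℤ, (q:ℝ) ^ ((n₀:ℤ) * z) ≤ r → z ≤ b := by
    obtain ⟨B, hB⟩ := pow_unbounded_of_one_lt r hq
    refine ⟨B, ?_⟩
    intro z hz
    by_contra hlt
    push_neg at hlt
    have h1 : ((B:ℤ)) ≤ (n₀:ℤ) * z := by nlinarith
    have h2 : (q:ℝ) ^ ((B:ℤ)) ≤ q ^ ((n₀:ℤ) * z) := zpow_le_zpow_right₀ hq.le h1
    rw [zpow_natCast] at h2
    linarith
  have hinh : ∃ z : ℤ, (q:ℝ) ^ ((n₀:ℤ) * z) ≤ r := by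
    obtain ⟨B, hB⟩ := pow_unbounded_of_one_lt r⁻¹ hq
    refine ⟨-(B:ℤ), ?_⟩
    have h3 : (0:ℝ) < q ^ B := pow_pos hq0 _
    have h2 : (q ^ B)⁻¹ < r := (inv_lt_comm₀ h3 hr).mpr hB
    have h4 : (q:ℝ) ^ ((n₀:ℤ) * (-(B:ℤ))) ≤ q ^ (-(B:ℤ)) :=
      zpow_le_zpow_right₀ hq.le (by nlinarith)
    refine h4.trans ?_
    rw [zpow_neg, zpow_natCast]
    exact h2.le
  obtain ⟨k, hk, hkmax⟩ := Int.exists_greatest_of_bdd hbdd hinh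
  set u : K := x₀ ^ k with hudef
  have hu : u ≠ 0 := zpow_ne_zero _ hx₀ne
  have hun : ‖u‖ = q ^ ((n₀:ℤ) * k) := by
    rw [hudef, norm_zpow, hx₀, ← zpow_mul]
  have hur : ‖u‖ ≤ r := by rw [hun]; exact hk
  have hballs : closedBall c r = closedBall c ‖u‖ := by
    ext s
    simp only [mem_closedBall, dist_eq_norm]
    constructor
    · intro hsr
      by_cases hsc : s = c
      · simp [hsc, norm_nonneg]
      · obtain ⟨k', hk'⟩ := hgrpv (s - c) (sub_ne_zero.mpr hsc)
        rw [hk', hun]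
        refine zpow_le_zpow_right₀ hq.le ?_
        have hk'le : k' ≤ k := hkmax k' (by rw [← hk']; exact hsr)
        nlinarith
    · intro h; exact h.trans hur
  have hrlt : r < q ^ ((n₀:ℤ) * (k + 1)) := by
    by_contra h
    push_neg at h
    have := hkmax (k + 1) h
    omega
  have hrad : r / q ^ (m₀ + n₀) ≤ (1 / q) ^ m₀ * ‖u‖ := by
    have hrhs : (1 / q) ^ m₀ * ‖u‖ = q ^ ((n₀:ℤ) * k - (m₀:ℤ)) := by
      rw [hun, one_div, inv_pow, ← zpow_natCast q m₀, ← zpow_neg, ← zpow_add₀ hq0.ne']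
      ring_nf
    have hlhs : (q:ℝ) ^ (m₀ + n₀) = q ^ ((m₀:ℤ) + (n₀:ℤ)) := by
      rw [← zpow_natCast, Nat.cast_add]
    rw [hrhs, hlhs]
    rw [div_le_iff₀ (zpow_pos hq0 _)]
    rw [← zpow_add₀ hq0.ne']
    have hexp : (n₀:ℤ) * k - (m₀:ℤ) + ((m₀:ℤ) + (n₀:ℤ)) = (n₀:ℤ) * (k + 1) := by ring
    rw [hexp]
    exact hrlt.le
  choose t₀f ht₀mem hbig using fun i : Fin M => hscalar (P i) (hPdeg i) c u hu
  have hradnn : (0:ℝ) ≤ (1 / q) ^ m₀ * ‖u‖ :=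
    mul_nonneg (pow_nonneg h1q0.le _) (norm_nonneg u)
  set Sfun : Fin M → ℝ := fun i => ‖MvPolynomial.eval (t₀f i) (P i)‖ with hSdef
  have hGi : ∀ i, IsGreatest ((fun s => ‖MvPolynomial.eval s (P i)‖) '' closedBall c ‖u‖)
      (Sfun i) := fun i => hbig i (t₀f i) (mem_closedBall_self hradnn)
  obtain ⟨istar, -, himax⟩ := Finset.exists_max_image Finset.univ Sfun
    ⟨⟨0, hM⟩, Finset.mem_univ _⟩
  refine ⟨t₀f istar, closedBall_subset_closedBall hur (ht₀mem istar), ?_⟩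
  intro t htb
  have htb' : t ∈ closedBall (t₀f istar) ((1 / q) ^ m₀ * ‖u‖) :=
    closedBall_subset_closedBall hrad htb
  have hGt := hbig istar t htb'
  have hSt : ‖MvPolynomial.eval t (P istar)‖ = Sfun istar := hGt.unique (hGi istar)
  have htcu : t ∈ closedBall c ‖u‖ := by
    rw [mem_closedBall_iff_norm]
    have h2 := PolyAux.pi_norm_add_le_max (t - t₀f istar) (t₀f istar - c)
    rw [sub_add_sub_cancel] at h2
    refine h2.trans (max_le ?_ ?_)
    · refine (mem_closedBall_iff_norm.mp htb').trans ?_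
      exact mul_le_of_le_one_left (norm_nonneg u) (pow_le_one₀ h1q0.le h1q1.le)
    · exact mem_closedBall_iff_norm.mp (ht₀mem istar)
  have htr : t ∈ closedBall c r := by rw [hballs]; exact htcu
  have hFt_ge : Sfun istar ≤ ‖F t‖ := by
    refine le_trans ?_ (norm_le_pi_norm (F t) istar)
    rw [hFP t istar, hSt]
  have hub : ∀ s ∈ closedBall c r, ‖F s‖ ≤ ‖F t‖ := by
    intro s hs
    have hs' : s ∈ closedBall c ‖u‖ := by rw [← hballs]; exact hs
    refine le_trans ?_ hFt_ge
    refine (pi_norm_le_iff_of_nonneg (norm_nonneg _)).mpr ?_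
    intro i
    rw [hFP s i]
    exact le_trans ((hGi i).2 ⟨s, hs', rfl⟩) (himax i (Finset.mem_univ i))
  apply le_antisymm
  · have hbddA : BddAbove (Set.range fun s => ⨆ _ : s ∈ closedBall c r, ‖F s‖) := by
      refine ⟨‖F t‖, ?_⟩
      rintro v ⟨s, rfl⟩
      exact Real.iSup_le (fun hs => hub s hs) (norm_nonneg _)
    calc ‖F t‖ = ⨆ _ : t ∈ closedBall c r, ‖F t‖ :=
          (ciSup_pos (f := fun _ : t ∈ closedBall c r => ‖F t‖) htr).symm
      _ ≤ ⨆ s, ⨆ _ : s ∈ closedBall c r, ‖F s‖ := le_ciSup hbddA t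
  · exact Real.iSup_le (fun s => Real.iSup_le (fun hs => hub s hs) (norm_nonneg _))
      (norm_nonneg _)
end

section
/- Let K be a nonarchimedean local field with residue field of cardinality q, and fix positive integers N, M, d. Given η ∈ (0,1), there exists R > 1, depending only on N, M, d, η and K, such that whenever B₀ ⊆ B are two balls in K^N of radii r₀ and r respectively with r₀ ≥ η·r, one has sup_{t ∈ B} |F(t)| ≤ R · sup_{t ∈ B₀} |F(t)| for every polynomial map F : K^N → K^M of degree at most d. -/
open Metric

section Helpers

open MvPolynomial

/-! ### Real `biSup` helpers -/

lemma le_biSup_aux {X : Type*} {f : X → ℝ} (hf : ∀ x, 0 ≤ f x) {s : Set X}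
    (hb : BddAbove (f '' s)) {t : X} (ht : t ∈ s) : f t ≤ ⨆ x ∈ s, f x := by
  obtain ⟨b, hbb⟩ := hb
  have hg : ∀ x, (⨆ _ : x ∈ s, f x) ≤ max b 0 := by
    intro x
    by_cases hx : x ∈ s
    · rw [ciSup_pos hx]
      exact le_max_of_le_left (hbb ⟨x, hx, rfl⟩)
    · haveI : IsEmpty (x ∈ s) := ⟨hx⟩
      rw [Real.iSup_of_isEmpty]
      exact le_max_right _ _
  have h1 : (⨆ _ : t ∈ s, f t) ≤ ⨆ x ∈ s, f x :=
    le_ciSup ⟨max b 0, by rintro _ ⟨x, rfl⟩; exact hg x⟩ t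
  rwa [ciSup_pos ht] at h1

lemma biSup_le_aux {X : Type*} {f : X → ℝ} {s : Set X} {a : ℝ}
    (h : ∀ x ∈ s, f x ≤ a) (ha : 0 ≤ a) : (⨆ x ∈ s, f x) ≤ a :=
  Real.iSup_le (fun x => Real.iSup_le (fun hx => h x hx) ha) ha

lemma biSup_nonneg_aux {X : Type*} {f : X → ℝ} (hf : ∀ x, 0 ≤ f x) (s : Set X) :
    0 ≤ ⨆ x ∈ s, f x :=
  Real.iSup_nonneg fun x => Real.iSup_nonneg fun _ => hf x

variable {K : Type*} [NontriviallyNormedField K] {N d : ℕ}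

/-! ### The sup norm of a polynomial over a ball -/

noncomputable def polySupNorm (r : ℝ) (P : MvPolynomial (Fin N) K) : ℝ :=
  sSup ((fun t => ‖eval t P‖) '' closedBall (0 : Fin N → K) r)

lemma norm_eval_le_sum {r : ℝ} (hr : r ≤ 1) {t : Fin N → K} (ht : ‖t‖ ≤ r)
    (P : MvPolynomial (Fin N) K) :
    ‖eval t P‖ ≤ ∑ α ∈ P.support, ‖coeff α P‖ := by
  rw [eval_eq]
  refine (norm_sum_le _ _).trans (Finset.sum_le_sum fun α hα => ?_)
  rw [norm_mul]
  have h1 : ‖∏ i ∈ α.support, t i ^ α i‖ ≤ 1 := by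
    rw [norm_prod]
    refine Finset.prod_le_one (fun i _ => by positivity) (fun i _ => ?_)
    rw [norm_pow]
    refine pow_le_one₀ (norm_nonneg _) ?_
    exact (norm_le_pi_norm t i).trans (ht.trans hr)
  exact mul_le_of_le_one_right (norm_nonneg _) h1

lemma bddAbove_polyImage {r : ℝ} (hr : r ≤ 1) (P : MvPolynomial (Fin N) K) :
    BddAbove ((fun t => ‖eval t P‖) '' closedBall (0 : Fin N → K) r) := by
  refine ⟨∑ α ∈ P.support, ‖coeff α P‖, ?_⟩
  rintro _ ⟨t, ht, rfl⟩
  exact norm_eval_le_sum hr (mem_closedBall_zero_iff.1 ht) P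

lemma polySupNorm_nonneg {r : ℝ} (hr : 0 ≤ r) (P : MvPolynomial (Fin N) K) :
    0 ≤ polySupNorm r P :=
  Real.sSup_nonneg' ⟨‖eval (0 : Fin N → K) P‖, ⟨0, mem_closedBall_self hr, rfl⟩, norm_nonneg _⟩

lemma le_polySupNorm {r : ℝ} (hr : r ≤ 1) {t : Fin N → K} (ht : ‖t‖ ≤ r)
    (P : MvPolynomial (Fin N) K) : ‖eval t P‖ ≤ polySupNorm r P :=
  le_csSup (bddAbove_polyImage hr P) ⟨t, mem_closedBall_zero_iff.2 ht, rfl⟩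

lemma polySupNorm_le {r a : ℝ} {P : MvPolynomial (Fin N) K}
    (h : ∀ t : Fin N → K, ‖t‖ ≤ r → ‖eval t P‖ ≤ a) (ha : 0 ≤ a) :
    polySupNorm r P ≤ a :=
  Real.sSup_le (by rintro _ ⟨t, ht, rfl⟩; exact h t (mem_closedBall_zero_iff.1 ht)) ha

/-! ### A polynomial vanishing on a ball is zero -/

lemma eq_zero_of_vanish_ball {r : ℝ} (hr : 0 < r) {P : MvPolynomial (Fin N) K}
    (h : ∀ t : Fin N → K, ‖t‖ ≤ r → eval t P = 0) : P = 0 := by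
  obtain ⟨ξ, hξ⟩ := NormedField.exists_one_lt_norm K
  haveI : Infinite K := by
    refine Infinite.of_injective (fun n : ℕ => ξ ^ n) (fun m n hmn => ?_)
    have hmn' : ξ ^ m = ξ ^ n := hmn
    have h2 : ‖ξ‖ ^ m = ‖ξ‖ ^ n := by rw [← norm_pow, ← norm_pow, hmn']
    have sm : StrictMono (fun n : ℕ => ‖ξ‖ ^ n) := fun a b hab => pow_lt_pow_right₀ hξ hab
    exact sm.injective h2
  refine MvPolynomial.funext fun x => ?_
  rw [map_zero]
  set f : Fin N → Polynomial K := fun i => Polynomial.C (x i) * Polynomial.X with hf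
  set q : Polynomial K := MvPolynomial.aeval f P with hq
  have key : ∀ μ : K, Polynomial.eval μ q = eval (fun i => x i * μ) P := by
    intro μ
    have h1 := MvPolynomial.comp_aeval (f := f) (Polynomial.aeval μ : Polynomial K →ₐ[K] K)
    have h2 := AlgHom.congr_fun h1 P
    simp only [AlgHom.comp_apply] at h2
    rw [hq, ← Polynomial.coe_aeval_eq_eval, h2]
    have h3 : (fun i => (Polynomial.aeval μ) (f i)) = fun i => x i * μ := by
      funext i; simp [hf]
    rw [h3, ← MvPolynomial.coe_aeval_eq_eval]
    rfl
  have hq0 : q = 0 := by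
    set δ : ℝ := r / (‖x‖ + 1) with hδ
    have hx1 : (0:ℝ) < ‖x‖ + 1 := by positivity
    have hδpos : 0 < δ := div_pos hr hx1
    obtain ⟨y, hy0, hylt⟩ := NormedField.exists_norm_lt K (lt_min hδpos one_pos)
    have hyδ : ‖y‖ ≤ δ := le_of_lt (lt_of_lt_of_le hylt (min_le_left _ _))
    have hy1 : ‖y‖ < 1 := lt_of_lt_of_le hylt (min_le_right _ _)
    apply Polynomial.eq_zero_of_infinite_isRoot
    apply Set.infinite_of_injective_forall_mem (f := fun n : ℕ => y ^ (n + 1))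
    · intro m n hmn
      have hmn' : y ^ (m + 1) = y ^ (n + 1) := hmn
      have h2 : ‖y‖ ^ (m + 1) = ‖y‖ ^ (n + 1) := by rw [← norm_pow, ← norm_pow, hmn']
      have sa : StrictAnti (fun n : ℕ => ‖y‖ ^ n) := fun a b hab =>
        pow_lt_pow_right_of_lt_one₀ hy0 hy1 hab
      exact Nat.succ_injective (sa.injective h2)
    · intro n
      show Polynomial.IsRoot q (y ^ (n + 1))
      have hynorm : ‖y ^ (n + 1)‖ ≤ δ := by
        rw [norm_pow]
        calc ‖y‖ ^ (n + 1) ≤ ‖y‖ ^ 1 :=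
              pow_le_pow_of_le_one (norm_nonneg _) hy1.le (by omega)
          _ = ‖y‖ := pow_one _
          _ ≤ δ := hyδ
      have hmem : ‖(fun i => x i * y ^ (n + 1) : Fin N → K)‖ ≤ r := by
        rw [pi_norm_le_iff_of_nonneg hr.le]
        intro i
        rw [norm_mul]
        calc ‖x i‖ * ‖y ^ (n+1)‖ ≤ (‖x‖ + 1) * δ := by
              refine mul_le_mul ?_ hynorm (norm_nonneg _) hx1.le
              exact (norm_le_pi_norm x i).trans (le_add_of_nonneg_right zero_le_one)
          _ = r := by rw [hδ, mul_div_cancel₀ _ (ne_of_gt hx1)]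
      unfold Polynomial.IsRoot
      rw [key]
      exact h _ hmem
  have := key 1
  rw [hq0, Polynomial.eval_zero] at this
  simpa using this.symm

/-! ### Total degree of affine substitution -/

lemma totalDegree_bind₁_le (f : Fin N → MvPolynomial (Fin N) K)
    (hf : ∀ j, (f j).totalDegree ≤ 1) (p : MvPolynomial (Fin N) K) :
    (MvPolynomial.bind₁ f p).totalDegree ≤ p.totalDegree := by
  conv_lhs => rw [p.as_sum]
  rw [map_sum]
  refine (totalDegree_finset_sum _ _).trans (Finset.sup_le fun α hα => ?_)
  rw [MvPolynomial.bind₁_monomial]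
  refine (totalDegree_mul _ _).trans ?_
  rw [totalDegree_C, zero_add]
  refine (totalDegree_finset_prod _ _).trans ?_
  refine le_trans (Finset.sum_le_sum fun j (_ : j ∈ α.support) =>
    (totalDegree_pow _ _).trans (Nat.mul_le_mul_left (α j) (hf j))) ?_
  simp only [mul_one]
  exact le_totalDegree hα

/-! ### Comparison of sup norms over concentric balls, via finite dimensionality -/

variable (K N d) in
def PolyBall (ρ : {x : ℝ // 0 < x ∧ x ≤ 1}) : Type _ :=
  MvPolynomial.restrictTotalDegree (Fin N) K d

namespace PolyBall

variable {ρ : {x : ℝ // 0 < x ∧ x ≤ 1}}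

noncomputable instance : AddCommGroup (PolyBall K N d ρ) :=
  inferInstanceAs (AddCommGroup (MvPolynomial.restrictTotalDegree (Fin N) K d))

noncomputable instance : Module K (PolyBall K N d ρ) :=
  inferInstanceAs (Module K (MvPolynomial.restrictTotalDegree (Fin N) K d))

noncomputable instance : Module.Finite K (PolyBall K N d ρ) :=
  inferInstanceAs (Module.Finite K (MvPolynomial.restrictTotalDegree (Fin N) K d))

def poly (P : PolyBall K N d ρ) : MvPolynomial (Fin N) K :=
  (show MvPolynomial.restrictTotalDegree (Fin N) K d from P).1

lemma poly_add (P Q : PolyBall K N d ρ) : poly (P + Q) = poly P + poly Q := rfl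

lemma poly_neg (P : PolyBall K N d ρ) : poly (-P) = -poly P := rfl

lemma poly_smul (a : K) (P : PolyBall K N d ρ) : poly (a • P) = a • poly P := rfl

lemma poly_zero : poly (0 : PolyBall K N d ρ) = 0 := rfl

noncomputable instance : NormedAddCommGroup (PolyBall K N d ρ) :=
  AddGroupNorm.toNormedAddCommGroup
  { toFun := fun P => polySupNorm ρ.1 (poly P)
    map_zero' := by
      refine le_antisymm (polySupNorm_le (fun t _ => ?_) le_rfl)
        (polySupNorm_nonneg ρ.2.1.le _)
      rw [poly_zero, map_zero, norm_zero]
    add_le' := fun P Q => by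
      refine polySupNorm_le (fun t ht => ?_)
        (add_nonneg (polySupNorm_nonneg ρ.2.1.le _) (polySupNorm_nonneg ρ.2.1.le _))
      rw [poly_add, map_add]
      exact (norm_add_le _ _).trans
        (add_le_add (le_polySupNorm ρ.2.2 ht _) (le_polySupNorm ρ.2.2 ht _))
    neg' := fun P => by
      simp only [polySupNorm, poly_neg, map_neg, norm_neg]
    eq_zero_of_map_eq_zero' := fun P hP => by
      have hP2 : polySupNorm ρ.1 (poly P) = 0 := hP
      have hvan : ∀ t : Fin N → K, ‖t‖ ≤ ρ.1 → eval t (poly P) = 0 := by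
        intro t ht
        have h1 := le_polySupNorm ρ.2.2 ht (poly P)
        rw [hP2] at h1
        simpa using le_antisymm h1 (norm_nonneg _)
      have h0 : poly P = 0 := eq_zero_of_vanish_ball ρ.2.1 hvan
      exact Subtype.ext h0 }

lemma norm_def (P : PolyBall K N d ρ) : ‖P‖ = polySupNorm ρ.1 (poly P) := rfl

noncomputable instance : NormedSpace K (PolyBall K N d ρ) := by
  refine ⟨fun a P => ?_⟩
  rw [norm_def, norm_def]
  refine polySupNorm_le (fun t ht => ?_)
    (mul_nonneg (norm_nonneg _) (polySupNorm_nonneg ρ.2.1.le _))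
  rw [poly_smul, MvPolynomial.smul_eval, norm_mul]
  exact mul_le_mul_of_nonneg_left (le_polySupNorm ρ.2.2 ht _) (norm_nonneg _)

end PolyBall

lemma exists_poly_comparison [CompleteSpace K] {ρ : ℝ} (h0 : 0 < ρ) (h1 : ρ ≤ 1) :
    ∃ C : ℝ, 0 < C ∧ ∀ P : MvPolynomial (Fin N) K, P.totalDegree ≤ d →
      polySupNorm 1 P ≤ C * polySupNorm ρ P := by
  let ρ' : {x : ℝ // 0 < x ∧ x ≤ 1} := ⟨ρ, h0, h1⟩
  let one' : {x : ℝ // 0 < x ∧ x ≤ 1} := ⟨1, one_pos, le_rfl⟩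
  let f : PolyBall K N d ρ' →ₗ[K] PolyBall K N d one' :=
    { toFun := fun P => show PolyBall K N d one' from P
      map_add' := fun _ _ => rfl
      map_smul' := fun _ _ => rfl }
  let g := LinearMap.toContinuousLinearMap f
  refine ⟨‖g‖ + 1, by positivity, fun P hP => ?_⟩
  set x : PolyBall K N d ρ' :=
    show MvPolynomial.restrictTotalDegree (Fin N) K d from
      ⟨P, (MvPolynomial.mem_restrictTotalDegree _ _ P).2 hP⟩ with hx
  have h := g.le_opNorm x
  have e1 : ‖g x‖ = polySupNorm 1 P := rfl
  have e2 : ‖x‖ = polySupNorm ρ P := rfl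
  rw [e1, e2] at h
  have hnn : 0 ≤ polySupNorm (K := K) (N := N) ρ P := polySupNorm_nonneg h0.le P
  nlinarith [norm_nonneg g]

end Helpers

/-- Over a nonarchimedean local field `K`: given `η ∈ (0,1)` there is `R > 1`, depending
only on `N, M, d, η` and `K`, such that whenever `B₀ ⊆ B` are balls in `K^N` of radii
`r₀` and `r` with `r₀ ≥ η·r`, one has `sup_B |F| ≤ R · sup_{B₀} |F|` for every polynomial
map `F : K^N → K^M` of degree at most `d`. -/
theorem polymap_sup_comparison_on_subball
    {K : Type*} [NontriviallyNormedField K] [IsUltrametricDist K]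
    [CompleteSpace K] [LocallyCompactSpace K]
    (N M d : ℕ) (hN : 0 < N) (hM : 0 < M) (hd : 0 < d)
    (η : ℝ) (hη₀ : 0 < η) (hη₁ : η < 1) :
    ∃ R : ℝ, 1 < R ∧
      ∀ (c₀ c : Fin N → K) (r₀ r : ℝ), 0 < r₀ → 0 < r →
        closedBall c₀ r₀ ⊆ closedBall c r → η * r ≤ r₀ →
        ∀ F : (Fin N → K) → (Fin M → K), IsPolyMapOfDeg K N M d F →
          (⨆ t ∈ closedBall c r, ‖F t‖) ≤ R * ⨆ t ∈ closedBall c₀ r₀, ‖F t‖ := by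
  classical
  obtain ⟨ξ, hξ⟩ := NormedField.exists_one_lt_norm K
  set y : ℝ := ‖ξ‖ with hy
  have hy0 : (0:ℝ) < y := lt_trans one_pos hξ
  set ρ : ℝ := min 1 (η / (2 * y)) with hρ
  have hρ0 : 0 < ρ := lt_min one_pos (by positivity)
  have hρ1 : ρ ≤ 1 := min_le_left _ _
  have hρη : ρ ≤ η / (2 * y) := min_le_right _ _
  obtain ⟨C, hC0, hcomp⟩ := exists_poly_comparison (K := K) (N := N) (d := d) hρ0 hρ1
  refine ⟨C + 2, by linarith, ?_⟩
  intro c₀ c r₀ r hr₀ hr hsub hηr F hF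
  obtain ⟨P, hPdeg, hFP⟩ := hF
  -- choose the scaling factor λ
  obtain ⟨n, hn1, hn2⟩ := exists_mem_Ico_zpow (x := 2 * r) (y := y) (by positivity) hξ
  set lam : K := ξ ^ (n + 1) with hlam
  have hlamnorm : ‖lam‖ = y ^ (n + 1) := by rw [hlam, norm_zpow, ← hy]
  have hξ' : (1:ℝ) < ‖ξ‖ := hξ
  have hξ0 : ξ ≠ 0 := norm_pos_iff.1 (lt_trans one_pos hξ')
  have hlam0 : lam ≠ 0 := zpow_ne_zero _ hξ0
  have hlampos : 0 < ‖lam‖ := norm_pos_iff.2 hlam0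
  have hlamlow : 2 * r ≤ ‖lam‖ := by rw [hlamnorm]; exact hn2.le
  have hlamhigh : ‖lam‖ ≤ 2 * r * y := by
    rw [hlamnorm, zpow_add_one₀ (ne_of_gt hy0)]
    exact mul_le_mul_of_nonneg_right hn1 hy0.le
  -- the substituted polynomials
  set fs : Fin N → MvPolynomial (Fin N) K :=
    fun j => MvPolynomial.C (c₀ j) + MvPolynomial.C lam * MvPolynomial.X j with hfs
  have hfsdeg : ∀ j, (fs j).totalDegree ≤ 1 := by
    intro j
    refine (MvPolynomial.totalDegree_add _ _).trans (max_le (by simp) ?_)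
    refine (MvPolynomial.totalDegree_mul _ _).trans ?_
    simp [MvPolynomial.totalDegree_X]
  set Q : Fin M → MvPolynomial (Fin N) K := fun i => MvPolynomial.bind₁ fs (P i) with hQ
  have hQdeg : ∀ i, (Q i).totalDegree ≤ d :=
    fun i => le_trans (totalDegree_bind₁_le fs hfsdeg (P i)) (hPdeg i)
  have hQeval : ∀ (u : Fin N → K) (i : Fin M),
      MvPolynomial.eval u (Q i) = F (c₀ + lam • u) i := by
    intro u i
    have h1 : MvPolynomial.eval u (MvPolynomial.bind₁ fs (P i)) =
        MvPolynomial.eval (fun j => MvPolynomial.eval u (fs j)) (P i) :=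
      MvPolynomial.eval₂Hom_bind₁ (RingHom.id K) u fs (P i)
    have harg : (fun j => MvPolynomial.eval u (fs j)) = c₀ + lam • u := by
      funext j
      simp [hfs, Pi.add_apply, Pi.smul_apply, smul_eq_mul]
    show MvPolynomial.eval u (MvPolynomial.bind₁ fs (P i)) = F (c₀ + lam • u) i
    rw [h1, harg]
    exact (hFP _ i).symm
  -- membership facts
  have hc₀c : dist c₀ c ≤ r := hsub (mem_closedBall_self hr₀.le)
  have hball : closedBall c r ⊆ closedBall c₀ ‖lam‖ := by
    intro t ht
    rw [mem_closedBall] at ht ⊢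
    calc dist t c₀ ≤ dist t c + dist c c₀ := dist_triangle _ _ _
      _ ≤ r + r := add_le_add ht (by rw [dist_comm]; exact hc₀c)
      _ ≤ ‖lam‖ := by linarith
  -- boundedness of ‖F ·‖ on the big ball
  set Bnd : ℝ := ∑ i : Fin M, ∑ α ∈ (Q i).support, ‖MvPolynomial.coeff α (Q i)‖ with hBnd
  have hBnd0 : 0 ≤ Bnd := Finset.sum_nonneg fun i _ =>
    Finset.sum_nonneg fun α _ => norm_nonneg _
  have hrepr : ∀ t ∈ closedBall c₀ ‖lam‖, ∃ u : Fin N → K, ‖u‖ ≤ 1 ∧ c₀ + lam • u = t := by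
    intro t ht
    refine ⟨lam⁻¹ • (t - c₀), ?_, ?_⟩
    · rw [norm_smul, norm_inv]
      have h2 : ‖t - c₀‖ ≤ ‖lam‖ := by
        rw [← dist_eq_norm]; exact mem_closedBall.1 ht
      calc ‖lam‖⁻¹ * ‖t - c₀‖ ≤ ‖lam‖⁻¹ * ‖lam‖ :=
            mul_le_mul_of_nonneg_left h2 (by positivity)
        _ = 1 := inv_mul_cancel₀ (ne_of_gt hlampos)
    · rw [smul_inv_smul₀ hlam0]
      abel
  have hFbound : ∀ t ∈ closedBall c₀ ‖lam‖, ‖F t‖ ≤ Bnd := by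
    intro t ht
    obtain ⟨u, hu, hut⟩ := hrepr t ht
    rw [pi_norm_le_iff_of_nonneg hBnd0]
    intro i
    have h3 : F t i = MvPolynomial.eval u (Q i) := by rw [← hut, hQeval]
    rw [h3]
    refine (norm_eval_le_sum le_rfl hu (Q i)).trans ?_
    exact Finset.single_le_sum (f := fun i => ∑ α ∈ (Q i).support, ‖MvPolynomial.coeff α (Q i)‖)
      (fun i _ => Finset.sum_nonneg fun α _ => norm_nonneg _) (Finset.mem_univ i)
  have hBdd : BddAbove ((fun t => ‖F t‖) '' closedBall c₀ ‖lam‖) := by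
    refine ⟨Bnd, ?_⟩
    rintro _ ⟨t, ht, rfl⟩
    exact hFbound t ht
  have hsub₀ : closedBall c₀ r₀ ⊆ closedBall c₀ ‖lam‖ := hsub.trans hball
  have hBdd0 : BddAbove ((fun t => ‖F t‖) '' closedBall c₀ r₀) :=
    hBdd.mono (Set.image_mono hsub₀)
  set S0 : ℝ := ⨆ t ∈ closedBall c₀ r₀, ‖F t‖ with hS0
  have hS0nn : 0 ≤ S0 := biSup_nonneg_aux (fun t => norm_nonneg _) _
  -- the small rescaled ball sits inside B(c₀, r₀)
  have hsmall : ∀ v : Fin N → K, ‖v‖ ≤ ρ → c₀ + lam • v ∈ closedBall c₀ r₀ := by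
    intro v hv
    rw [mem_closedBall, dist_eq_norm, add_sub_cancel_left, norm_smul]
    calc ‖lam‖ * ‖v‖ ≤ (2 * r * y) * (η / (2 * y)) := by
          refine mul_le_mul hlamhigh (hv.trans hρη) (norm_nonneg _) (by positivity)
      _ = η * r := by field_simp
      _ ≤ r₀ := hηr
  -- pointwise bound on the big ball
  have hkey : ∀ t ∈ closedBall c₀ ‖lam‖, ‖F t‖ ≤ C * S0 := by
    intro t ht
    obtain ⟨u, hu, hut⟩ := hrepr t ht
    rw [pi_norm_le_iff_of_nonneg (mul_nonneg hC0.le hS0nn)]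
    intro i
    have h3 : F t i = MvPolynomial.eval u (Q i) := by rw [← hut, hQeval]
    rw [h3]
    have h4 : ‖MvPolynomial.eval u (Q i)‖ ≤ polySupNorm 1 (Q i) :=
      le_polySupNorm le_rfl hu (Q i)
    have h5 : polySupNorm 1 (Q i) ≤ C * polySupNorm ρ (Q i) := hcomp (Q i) (hQdeg i)
    have h6 : polySupNorm ρ (Q i) ≤ S0 := by
      refine polySupNorm_le (fun v hv => ?_) hS0nn
      have h7 : MvPolynomial.eval v (Q i) = F (c₀ + lam • v) i := hQeval v i
      rw [h7]
      refine (norm_le_pi_norm _ i).trans ?_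
      exact le_biSup_aux (fun x => norm_nonneg _) hBdd0 (hsmall v hv)
    calc ‖MvPolynomial.eval u (Q i)‖ ≤ C * polySupNorm ρ (Q i) := h4.trans h5
      _ ≤ C * S0 := mul_le_mul_of_nonneg_left h6 hC0.le
  calc (⨆ t ∈ closedBall c r, ‖F t‖) ≤ C * S0 :=
        biSup_le_aux (fun t ht => hkey t (hball ht)) (mul_nonneg hC0.le hS0nn)
    _ ≤ (C + 2) * S0 := mul_le_mul_of_nonneg_right (by linarith) hS0nn
end
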